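/- Let H ∈ (0,1/2) and θ ∈ (0,1). Set θ_n = ⌊Δ_n^{-θ}⌋ for a sequence Δ_n ↓ 0, and let g(t) = K_H^{-1} t^{H-1/2} for t > 0 (0 otherwise), with increments Δ_i g(s) = g(iΔ_n - s) - g((i-1)Δ_n - s). Then there is a constant C depending only on H such that for all n, all i > θ_n and all r ∈ ℕ: ∫_{-∞}^{(i-θ_n)Δ_n} Δ_i g(s) Δ_{i+r} g(s) ds ≤ C Δ_n^{2H} Δ_n^{2θ(1-H)}. -/

import Mathlib

set_option maxHeartbeats 1000000

open MeasureTheory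

/-- The fractional kernel `g(t) = K⁻¹ t^{H-1/2}` for `t > 0`, and `0` for `t ≤ 0`. -/
noncomputable def fracKernel (H K t : ℝ) : ℝ :=
  if 0 < t then K⁻¹ * t ^ (H - 1/2) else 0


lemma fk_nonneg {H K : ℝ} (hk : 0 ≤ K⁻¹) (t : ℝ) : 0 ≤ fracKernel H K t := by
  unfold fracKernel
  split
  · exact mul_nonneg hk (Real.rpow_nonneg (le_of_lt ‹_›) _)
  · exact le_refl 0

lemma fk_anti {H K : ℝ} (hH : H < 1/2) (hk : 0 ≤ K⁻¹) {t₁ t₂ : ℝ} (h1 : 0 < t₁) (h12 : t₁ ≤ t₂) :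
    fracKernel H K t₂ ≤ fracKernel H K t₁ := by
  unfold fracKernel
  rw [if_pos h1, if_pos (lt_of_lt_of_le h1 h12)]
  exact mul_le_mul_of_nonneg_left
    (Real.rpow_le_rpow_of_nonpos h1 h12 (by linarith)) hk

lemma rpow_mvt {e x d : ℝ} (he : e < 0) (hx : 0 < x) (hd : 0 ≤ d) :
    x ^ e - (x + d) ^ e ≤ -e * d * x ^ (e - 1) := by
  rcases eq_or_lt_of_le hd with h | h
  · simp [← h]
  · have hab : x < x + d := by linarith
    have hfc : ContinuousOn (fun t : ℝ => t ^ e) (Set.Icc x (x + d)) := by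
      intro t ht
      exact (Real.continuousAt_rpow_const t e (Or.inl (ne_of_gt (lt_of_lt_of_le hx ht.1)))).continuousWithinAt
    have hder : ∀ t ∈ Set.Ioo x (x + d),
        HasDerivAt (fun t : ℝ => t ^ e) (e * t ^ (e - 1)) t := fun t ht =>
      Real.hasDerivAt_rpow_const (Or.inl (ne_of_gt (lt_trans hx ht.1)))
    obtain ⟨c, hc, hceq⟩ := exists_hasDerivAt_eq_slope (fun t : ℝ => t ^ e)
      (fun t => e * t ^ (e - 1)) hab hfc hder
    have hce : c ^ (e - 1) ≤ x ^ (e - 1) :=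
      Real.rpow_le_rpow_of_nonpos hx (le_of_lt hc.1) (by linarith)
    have hxe : 0 ≤ x ^ (e - 1) := Real.rpow_nonneg hx.le _
    have h2 : (x + d) ^ e - x ^ e = e * c ^ (e - 1) * d := by
      field_simp at hceq
      rw [show x + d - x = d by ring, eq_div_iff (ne_of_gt h)] at hceq
      linarith
    nlinarith [h2, mul_le_mul_of_nonneg_left hce (le_of_lt (neg_pos.mpr he))]

lemma fk_pair_bound (H K : ℝ) (hH : 0 < H ∧ H < 1/2) (hk : 0 ≤ K⁻¹) {δ r' : ℝ}
    (hδ : 0 < δ) (hr : δ ≤ r') (u : ℝ) :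
    (fracKernel H K (u + δ) - fracKernel H K u) *
      (fracKernel H K (u + r' + δ) - fracKernel H K (u + r')) ≤
    Set.indicator (Set.Ioc 0 δ)
        (fun v => K⁻¹ * K⁻¹ * (1/2 - H) * δ ^ (H - 1/2) * v ^ (H - 1/2)) u
      + Set.indicator (Set.Ioi δ)
        (fun v => K⁻¹ * K⁻¹ * ((1/2 - H) * δ) * ((1/2 - H) * δ) * v ^ (2 * H - 3)) u := by
  obtain ⟨hH0, hH12⟩ := hH
  have he : H - 1/2 < 0 := by linarith
  rcases le_or_gt u 0 with hu | hu
  · -- RHS is 0, LHS ≤ 0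
    rw [Set.indicator_of_notMem (by simp [Set.mem_Ioc]; intro h; linarith),
      Set.indicator_of_notMem (by simp [Set.mem_Ioi]; linarith)]
    rcases le_or_gt (u + r') 0 with hur | hur
    · have h1 : fracKernel H K (u + δ) = 0 := by
        unfold fracKernel; rw [if_neg (by push_neg; linarith)]
      have h2 : fracKernel H K u = 0 := by
        unfold fracKernel; rw [if_neg (by push_neg; linarith)]
      rw [h1, h2]; simp
    · have h2 : fracKernel H K u = 0 := by
        unfold fracKernel; rw [if_neg (by push_neg; linarith)]
      have hfst : 0 ≤ fracKernel H K (u + δ) - fracKernel H K u := by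
        rw [h2, sub_zero]; exact fk_nonneg hk _
      have hsnd : fracKernel H K (u + r' + δ) - fracKernel H K (u + r') ≤ 0 :=
        sub_nonpos.mpr (fk_anti hH12 hk hur (by linarith))
      rw [add_zero]
      exact mul_nonpos_of_nonneg_of_nonpos hfst hsnd
  · -- 0 < u : all arguments positive
    have hu1 : (0:ℝ) < u + δ := by linarith
    have hu2 : (0:ℝ) < u + r' := by linarith
    have hu3 : (0:ℝ) < u + r' + δ := by linarith
    have e1 : fracKernel H K (u + δ) = K⁻¹ * (u + δ) ^ (H - 1/2) := if_pos hu1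
    have e2 : fracKernel H K u = K⁻¹ * u ^ (H - 1/2) := if_pos hu
    have e3 : fracKernel H K (u + r' + δ) = K⁻¹ * (u + r' + δ) ^ (H - 1/2) := if_pos hu3
    have e4 : fracKernel H K (u + r') = K⁻¹ * (u + r') ^ (H - 1/2) := if_pos hu2
    set P := u ^ (H - 1/2) - (u + δ) ^ (H - 1/2) with hP
    set Q := (u + r') ^ (H - 1/2) - (u + r' + δ) ^ (H - 1/2) with hQ
    have hPnn : 0 ≤ P := sub_nonneg.mpr (Real.rpow_le_rpow_of_nonpos hu (by linarith) he.le)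
    have hQnn : 0 ≤ Q := sub_nonneg.mpr (Real.rpow_le_rpow_of_nonpos hu2 (by linarith) he.le)
    have hQle : Q ≤ (1/2 - H) * δ * (u + r') ^ (H - 1/2 - 1) := by
      have := rpow_mvt he hu2 hδ.le
      calc Q ≤ -(H - 1/2) * δ * (u + r') ^ (H - 1/2 - 1) := this
        _ = (1/2 - H) * δ * (u + r') ^ (H - 1/2 - 1) := by ring
    have hLHS : (fracKernel H K (u + δ) - fracKernel H K u) *
        (fracKernel H K (u + r' + δ) - fracKernel H K (u + r'))
        = (K⁻¹ * K⁻¹) * (P * Q) := by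
      rw [e1, e2, e3, e4, hP, hQ]; ring
    have hkk : 0 ≤ K⁻¹ * K⁻¹ := mul_nonneg hk hk
    rcases le_or_gt u δ with huδ | huδ
    · -- 0 < u ≤ δ
      rw [Set.indicator_of_mem (Set.mem_Ioc.mpr ⟨hu, huδ⟩),
        Set.indicator_of_notMem (by simp [Set.mem_Ioi]; linarith), add_zero, hLHS]
      have hPle : P ≤ u ^ (H - 1/2) := by
        have : 0 ≤ (u + δ) ^ (H - 1/2) := Real.rpow_nonneg hu1.le _
        linarith [hP]
      have hQle2 : Q ≤ (1/2 - H) * δ ^ (H - 1/2) := by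
        have h1 : (u + r') ^ (H - 1/2 - 1) ≤ δ ^ (H - 1/2 - 1) :=
          Real.rpow_le_rpow_of_nonpos hδ (by linarith) (by linarith)
        have h2 : δ * δ ^ (H - 1/2 - 1) = δ ^ (H - 1/2) := by
          nth_rewrite 1 [← Real.rpow_one δ]
          rw [← Real.rpow_add hδ, show (1:ℝ) + (H - 1/2 - 1) = H - 1/2 by ring]
        calc Q ≤ (1/2 - H) * δ * (u + r') ^ (H - 1/2 - 1) := hQle
          _ ≤ (1/2 - H) * δ * δ ^ (H - 1/2 - 1) := by
              exact mul_le_mul_of_nonneg_left h1 (mul_nonneg (by linarith : (0:ℝ) ≤ 1/2 - H) hδ.le)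
          _ = (1/2 - H) * δ ^ (H - 1/2) := by rw [mul_assoc, h2]
      have hPQ : P * Q ≤ u ^ (H - 1/2) * ((1/2 - H) * δ ^ (H - 1/2)) :=
        mul_le_mul hPle hQle2 hQnn (Real.rpow_nonneg hu.le _)
      calc (K⁻¹ * K⁻¹) * (P * Q)
          ≤ (K⁻¹ * K⁻¹) * (u ^ (H - 1/2) * ((1/2 - H) * δ ^ (H - 1/2))) :=
            mul_le_mul_of_nonneg_left hPQ hkk
        _ = K⁻¹ * K⁻¹ * (1/2 - H) * δ ^ (H - 1/2) * u ^ (H - 1/2) := by ring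
    · -- δ < u
      rw [Set.indicator_of_notMem (by simp [Set.mem_Ioc]; intro h; linarith),
        Set.indicator_of_mem (Set.mem_Ioi.mpr huδ), zero_add, hLHS]
      have hPle : P ≤ (1/2 - H) * δ * u ^ (H - 1/2 - 1) := by
        have := rpow_mvt he hu hδ.le
        calc P ≤ -(H - 1/2) * δ * u ^ (H - 1/2 - 1) := this
          _ = (1/2 - H) * δ * u ^ (H - 1/2 - 1) := by ring
      have hQle2 : Q ≤ (1/2 - H) * δ * u ^ (H - 1/2 - 1) := by
        have h1 : (u + r') ^ (H - 1/2 - 1) ≤ u ^ (H - 1/2 - 1) :=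
          Real.rpow_le_rpow_of_nonpos hu (by linarith) (by linarith)
        calc Q ≤ (1/2 - H) * δ * (u + r') ^ (H - 1/2 - 1) := hQle
          _ ≤ (1/2 - H) * δ * u ^ (H - 1/2 - 1) := by
              exact mul_le_mul_of_nonneg_left h1 (mul_nonneg (by linarith : (0:ℝ) ≤ 1/2 - H) hδ.le)
      have hupow : 0 ≤ u ^ (H - 1/2 - 1) := Real.rpow_nonneg hu.le _
      have hPQ : P * Q ≤ ((1/2 - H) * δ * u ^ (H - 1/2 - 1)) *
          ((1/2 - H) * δ * u ^ (H - 1/2 - 1)) :=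
        mul_le_mul hPle hQle2 hQnn (mul_nonneg (mul_nonneg (by linarith : (0:ℝ) ≤ 1/2 - H) hδ.le) hupow)
      have hup2 : u ^ (H - 1/2 - 1) * u ^ (H - 1/2 - 1) = u ^ (2 * H - 3) := by
        rw [← Real.rpow_add hu, show (H - 1/2 - 1) + (H - 1/2 - 1) = 2 * H - 3 by ring]
      calc (K⁻¹ * K⁻¹) * (P * Q)
          ≤ (K⁻¹ * K⁻¹) * (((1/2 - H) * δ * u ^ (H - 1/2 - 1)) *
              ((1/2 - H) * δ * u ^ (H - 1/2 - 1))) := mul_le_mul_of_nonneg_left hPQ hkk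
        _ = K⁻¹ * K⁻¹ * ((1/2 - H) * δ) * ((1/2 - H) * δ) *
              (u ^ (H - 1/2 - 1) * u ^ (H - 1/2 - 1)) := by ring
        _ = K⁻¹ * K⁻¹ * ((1/2 - H) * δ) * ((1/2 - H) * δ) * u ^ (2 * H - 3) := by
              rw [hup2]

lemma cov_Iio (F : ℝ → ℝ) (c m : ℝ) :
    ∫ s in Set.Iio m, F (c - s) = ∫ u in Set.Ioi (c - m), F u := by
  have hemb : MeasurableEmbedding (fun x : ℝ => c - x) :=
    (MeasurableEquiv.subLeft c).measurableEmbedding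
  have hmp : MeasurePreserving (fun x : ℝ => c - x) volume volume :=
    Measure.measurePreserving_sub_left volume c
  have hpre : (fun x : ℝ => c - x) ⁻¹' (Set.Ioi (c - m)) = Set.Iio m := by
    ext x; simp [sub_lt_sub_iff_left]
  rw [← hpre]
  exact hmp.setIntegral_preimage_emb hemb F _

lemma cov_int (F : ℝ → ℝ) (c m : ℝ) (h : IntegrableOn F (Set.Ioi (c - m))) :
    IntegrableOn (fun s => F (c - s)) (Set.Iio m) := by
  have hemb : MeasurableEmbedding (fun x : ℝ => c - x) :=
    (MeasurableEquiv.subLeft c).measurableEmbedding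
  have hmp : MeasurePreserving (fun x : ℝ => c - x) volume volume :=
    Measure.measurePreserving_sub_left volume c
  have hpre : (fun x : ℝ => c - x) ⁻¹' (Set.Ioi (c - m)) = Set.Iio m := by
    ext x; simp [sub_lt_sub_iff_left]
  rw [← hpre]
  exact (hmp.integrableOn_comp_preimage hemb).mpr h

noncomputable def fkA (H : ℝ) : ℝ :=
  9*(1/2-H)*(1/2-H)/(2-2*H) + 4*((1/2-H)/(H+1/2) + (1/2-H)*(1/2-H)/(2-2*H))


lemma fkA_nonneg {H : ℝ} (hH0 : 0 < H) (hH12 : H < 1/2) : 0 ≤ fkA H := by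
  unfold fkA
  have h1 : (0:ℝ) ≤ 1/2 - H := by linarith
  have h2 : (0:ℝ) < 2 - 2*H := by linarith
  have h3 : (0:ℝ) < H + 1/2 := by linarith
  have := div_nonneg (mul_nonneg (mul_nonneg (by norm_num : (0:ℝ) ≤ 9) h1) h1) h2.le
  have := div_nonneg h1 h3.le
  have := div_nonneg (mul_nonneg h1 h1) h2.le
  nlinarith

lemma fk_core (H θ : ℝ) (hH0 : 0 < H) (hH12 : H < 1/2) (K : ℝ) (hk : 0 ≤ K⁻¹)
    {δ : ℝ} (hδ : 0 < δ) (i r : ℕ) (hr : 1 ≤ r) :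
    (∫ s in Set.Iio (((i:ℝ) - (⌊δ ^ (-θ)⌋₊ : ℝ)) * δ),
        (fracKernel H K ((i:ℝ) * δ - s) - fracKernel H K (((i:ℝ) - 1) * δ - s)) *
        (fracKernel H K (((i:ℝ) + (r:ℝ)) * δ - s)
          - fracKernel H K ((((i:ℝ) + (r:ℝ)) - 1) * δ - s)))
      ≤ (K⁻¹ * K⁻¹ * fkA H + 1) * δ ^ (2 * H) * δ ^ (2 * θ * (1 - H)) := by
  have hkk : 0 ≤ K⁻¹ * K⁻¹ := mul_nonneg hk hk
  have hAnn : 0 ≤ fkA H := fkA_nonneg hH0 hH12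
  have hCnn : (0:ℝ) ≤ K⁻¹ * K⁻¹ * fkA H + 1 := by positivity
  set a : ℕ := ⌊δ ^ (-θ)⌋₊ with ha
  set c : ℝ := ((i:ℝ) - 1) * δ with hcdef
  set m : ℝ := ((i:ℝ) - (a:ℝ)) * δ with hmdef
  set b : ℝ := ((a:ℝ) - 1) * δ with hbdef
  have hcm : c - m = b := by rw [hcdef, hmdef, hbdef]; ring
  clear_value c m b
  set φ₁ : ℝ → ℝ := fun v => K⁻¹ * K⁻¹ * (1/2 - H) * δ ^ (H - 1/2) * v ^ (H - 1/2) with hφ₁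
  set φ₂ : ℝ → ℝ :=
    fun v => K⁻¹ * K⁻¹ * ((1/2 - H) * δ) * ((1/2 - H) * δ) * v ^ (2 * H - 3) with hφ₂
  set G : ℝ → ℝ :=
    fun u => Set.indicator (Set.Ioc 0 δ) φ₁ u + Set.indicator (Set.Ioi δ) φ₂ u with hGdef
  have hGnn : ∀ u, 0 ≤ G u := by
    intro u
    simp only [hGdef, hφ₁, hφ₂]
    refine add_nonneg (Set.indicator_nonneg ?_ u) (Set.indicator_nonneg ?_ u)
    · intro v hv
      exact mul_nonneg (mul_nonneg (mul_nonneg hkk (by linarith))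
        (Real.rpow_nonneg hδ.le _)) (Real.rpow_nonneg hv.1.le _)
    · intro v hv
      have hv0 : (0:ℝ) ≤ v := le_trans hδ.le (le_of_lt hv)
      exact mul_nonneg (mul_nonneg (mul_nonneg hkk
        (mul_nonneg (by linarith) hδ.le)) (mul_nonneg (by linarith) hδ.le))
        (Real.rpow_nonneg hv0 _)
  have hint1 : IntegrableOn φ₁ (Set.Ioc 0 δ) :=
    ((intervalIntegral.intervalIntegrable_rpow' (a := 0) (b := δ)
      (by linarith : (-1:ℝ) < H - 1/2)).1).const_mul _
  have hint2 : IntegrableOn φ₂ (Set.Ioi δ) :=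
    (integrableOn_Ioi_rpow_of_lt (by linarith : 2*H - 3 < -1) hδ).const_mul _
  have hind1 : Integrable (Set.indicator (Set.Ioc 0 δ) φ₁) :=
    hint1.integrable_indicator measurableSet_Ioc
  have hind2 : Integrable (Set.indicator (Set.Ioi δ) φ₂) :=
    hint2.integrable_indicator measurableSet_Ioi
  have hGint : Integrable G := by rw [hGdef]; exact hind1.add hind2
  clear_value G
  have hpoint : ∀ s : ℝ,
      (fracKernel H K ((i:ℝ) * δ - s) - fracKernel H K (c - s)) *
        (fracKernel H K (((i:ℝ) + (r:ℝ)) * δ - s)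
          - fracKernel H K ((((i:ℝ) + (r:ℝ)) - 1) * δ - s)) ≤ G (c - s) := by
    intro s
    have hr' : δ ≤ (r:ℝ) * δ :=
      le_mul_of_one_le_left hδ.le (by exact_mod_cast hr)
    have h := fk_pair_bound H K ⟨hH0, hH12⟩ hk hδ hr' (c - s)
    have a1 : (i:ℝ) * δ - s = (c - s) + δ := by rw [hcdef]; ring
    have a3 : ((i:ℝ) + (r:ℝ)) * δ - s = (c - s) + (r:ℝ) * δ + δ := by rw [hcdef]; ring
    have a4 : (((i:ℝ) + (r:ℝ)) - 1) * δ - s = (c - s) + (r:ℝ) * δ := by rw [hcdef]; ring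
    rw [a1, a3, a4]
    simp only [hGdef, hφ₁, hφ₂]
    exact h
  -- main bound on ∫ over Ioi b of G
  have hval : ∫ u in Set.Ioi b, G u
      ≤ (K⁻¹ * K⁻¹ * fkA H + 1) * δ ^ (2 * H) * δ ^ (2 * θ * (1 - H)) := by
    have hsplit : ∫ u in Set.Ioi b, G u
        = (∫ u in Set.Ioi b ∩ Set.Ioc 0 δ, φ₁ u)
          + ∫ u in Set.Ioi b ∩ Set.Ioi δ, φ₂ u := by
      rw [hGdef]
      rw [integral_add hind1.integrableOn hind2.integrableOn,
        setIntegral_indicator measurableSet_Ioc, setIntegral_indicator measurableSet_Ioi]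
    have h2H : (0:ℝ) < δ ^ (2 * H) := Real.rpow_pos_of_pos hδ _
    rcases le_or_gt a 1 with hale | ha2
    · -- θ_n ≤ 1, crude bound
      have ha1 : (a:ℝ) ≤ 1 := by exact_mod_cast hale
      have hb0 : b ≤ 0 := by
        rw [hbdef]
        exact mul_nonpos_iff.mpr (Or.inr ⟨by linarith, hδ.le⟩)
      have hs1 : Set.Ioi b ∩ Set.Ioc 0 δ = Set.Ioc 0 δ :=
        Set.inter_eq_self_of_subset_right (fun u hu => lt_of_le_of_lt hb0 hu.1)
      have hs2 : Set.Ioi b ∩ Set.Ioi δ = Set.Ioi δ :=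
        Set.inter_eq_self_of_subset_right (fun u hu => lt_of_le_of_lt (hb0.trans hδ.le) hu)
      have I1 : ∫ u in Set.Ioc 0 δ, φ₁ u
          = K⁻¹ * K⁻¹ * (1/2 - H) * δ ^ (H - 1/2)
            * (δ ^ (H - 1/2 + 1) / (H - 1/2 + 1)) := by
        simp only [hφ₁]
        rw [integral_const_mul, ← intervalIntegral.integral_of_le hδ.le,
          integral_rpow (Or.inl (by linarith : (-1:ℝ) < H - 1/2)),
          Real.zero_rpow (ne_of_gt (by linarith : (0:ℝ) < H - 1/2 + 1)), sub_zero]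
      have I2 : ∫ u in Set.Ioi δ, φ₂ u
          = K⁻¹ * K⁻¹ * ((1/2 - H) * δ) * ((1/2 - H) * δ)
            * (-δ ^ (2 * H - 3 + 1) / (2 * H - 3 + 1)) := by
        simp only [hφ₂]
        rw [integral_const_mul, integral_Ioi_rpow_of_lt (by linarith : 2*H - 3 < -1) hδ]
      have E1 : δ ^ (H - 1/2) * δ ^ (H - 1/2 + 1) = δ ^ (2 * H) := by
        rw [← Real.rpow_add hδ, show (H - 1/2) + (H - 1/2 + 1) = 2*H by ring]
      have E2 : δ * δ * δ ^ (2 * H - 3 + 1) = δ ^ (2 * H) := by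
        have hδ2 : δ * δ = δ ^ (2:ℝ) := by rw [Real.rpow_two]; ring
        rw [hδ2, ← Real.rpow_add hδ, show (2:ℝ) + (2*H - 3 + 1) = 2*H by ring]
      -- δ ^ (2θ(1-H)) ≥ 1/4
      have hfl : δ ^ (-θ) < 2 := by
        have h2 : a < 2 := by omega
        have := (Nat.floor_lt (Real.rpow_nonneg hδ.le _)).1 (ha ▸ h2)
        exact_mod_cast this
      have hθp : (0:ℝ) < δ ^ θ := Real.rpow_pos_of_pos hδ θ
      have h12 : (1:ℝ)/2 ≤ δ ^ θ := by
        have hinv : δ ^ (-θ) = (δ ^ θ)⁻¹ := Real.rpow_neg hδ.le θ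
        rw [hinv] at hfl
        have hmul := inv_mul_cancel₀ (ne_of_gt hθp)
        nlinarith
      have E3 : (1:ℝ)/4 ≤ δ ^ (2 * θ * (1 - H)) := by
        have h1 : δ ^ (2*θ*(1-H)) = (δ ^ θ) ^ (2*(1-H)) := by
          rw [show 2*θ*(1-H) = θ*(2*(1-H)) by ring, Real.rpow_mul hδ.le]
        have h2 : ((1:ℝ)/2) ^ (2*(1-H)) ≤ (δ ^ θ) ^ (2*(1-H)) :=
          Real.rpow_le_rpow (by norm_num) h12 (by linarith)
        have h3 : ((1:ℝ)/2) ^ ((2:ℝ)) ≤ ((1:ℝ)/2) ^ (2*(1-H)) :=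
          Real.rpow_le_rpow_of_exponent_ge (by norm_num) (by norm_num) (by linarith)
        have h4 : ((1:ℝ)/2) ^ ((2:ℝ)) = 1/4 := by rw [Real.rpow_two]; norm_num
        rw [h1]; linarith
      rw [hsplit, hs1, hs2, I1, I2]
      have hT : K⁻¹ * K⁻¹ * (1/2 - H) * δ ^ (H - 1/2) * (δ ^ (H - 1/2 + 1) / (H - 1/2 + 1))
          + K⁻¹ * K⁻¹ * ((1/2 - H) * δ) * ((1/2 - H) * δ)
            * (-δ ^ (2 * H - 3 + 1) / (2 * H - 3 + 1))
          = K⁻¹ * K⁻¹ * ((1/2 - H) / (H + 1/2)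
              + (1/2 - H) * (1/2 - H) / (2 - 2*H)) * δ ^ (2 * H) := by
        have d1 : H - 1/2 + 1 ≠ 0 := by intro h; nlinarith
        have d2 : 2*H - 3 + 1 ≠ 0 := by intro h; nlinarith
        have d3 : H + 1/2 ≠ 0 := by intro h; nlinarith
        have d4 : 2 - 2*H ≠ 0 := by intro h; nlinarith
        have key : ∀ k : ℝ, k * k * (1/2 - H) * δ ^ (H - 1/2)
              * (δ ^ (H - 1/2 + 1) / (H - 1/2 + 1))
            + k * k * ((1/2 - H) * δ) * ((1/2 - H) * δ)
              * (-δ ^ (2 * H - 3 + 1) / (2 * H - 3 + 1))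
            = k * k * ((1/2 - H) / (H + 1/2)
              + (1/2 - H) * (1/2 - H) / (2 - 2*H)) * δ ^ (2 * H) := by
          intro k
          have hd : -((2*H - 3 + 1:ℝ))⁻¹ = (2 - 2*H)⁻¹ := by
            rw [show (2*H - 3 + 1:ℝ) = -(2 - 2*H) by ring, inv_neg, neg_neg]
          calc k * k * (1/2 - H) * δ ^ (H - 1/2) * (δ ^ (H - 1/2 + 1) / (H - 1/2 + 1))
              + k * k * ((1/2 - H) * δ) * ((1/2 - H) * δ)
                * (-δ ^ (2 * H - 3 + 1) / (2 * H - 3 + 1))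
              = (k * k * (1/2 - H) / (H - 1/2 + 1))
                  * (δ ^ (H - 1/2) * δ ^ (H - 1/2 + 1))
                + (k * k * ((1/2 - H) * (1/2 - H)) * (-((2*H - 3 + 1:ℝ))⁻¹))
                  * (δ * δ * δ ^ (2 * H - 3 + 1)) := by ring
            _ = (k * k * (1/2 - H) / (H - 1/2 + 1)) * δ ^ (2 * H)
                + (k * k * ((1/2 - H) * (1/2 - H)) * (-((2*H - 3 + 1:ℝ))⁻¹)) * δ ^ (2 * H) := by
                rw [E1, E2]
            _ = k * k * ((1/2 - H) / (H + 1/2)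
                + (1/2 - H) * (1/2 - H) / (2 - 2*H)) * δ ^ (2 * H) := by
                rw [hd, show H - 1/2 + 1 = H + 1/2 by ring]
                ring
        exact key K⁻¹
      rw [hT]
      have hN : 4 * ((1/2 - H) / (H + 1/2) + (1/2 - H) * (1/2 - H) / (2 - 2*H)) ≤ fkA H := by
        unfold fkA
        have h1 : (0:ℝ) ≤ 1/2 - H := by linarith
        have h2 : (0:ℝ) < 2 - 2*H := by linarith
        have := div_nonneg (mul_nonneg (mul_nonneg (by norm_num : (0:ℝ) ≤ 9) h1) h1) h2.le
        linarith
      have hNnn : (0:ℝ) ≤ (1/2 - H) / (H + 1/2) + (1/2 - H) * (1/2 - H) / (2 - 2*H) := by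
        have h1 : (0:ℝ) ≤ 1/2 - H := by linarith
        have h2 : (0:ℝ) < 2 - 2*H := by linarith
        have h3 : (0:ℝ) < H + 1/2 := by linarith
        have := div_nonneg h1 h3.le
        have := div_nonneg (mul_nonneg h1 h1) h2.le
        linarith
      have h4 : K⁻¹ * K⁻¹ * ((1/2 - H) / (H + 1/2) + (1/2 - H) * (1/2 - H) / (2 - 2*H))
          ≤ (K⁻¹ * K⁻¹ * fkA H + 1) * (1/4) := by
        nlinarith [mul_le_mul_of_nonneg_left hN hkk]
      calc K⁻¹ * K⁻¹ * ((1/2 - H) / (H + 1/2)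
              + (1/2 - H) * (1/2 - H) / (2 - 2*H)) * δ ^ (2 * H)
          ≤ ((K⁻¹ * K⁻¹ * fkA H + 1) * (1/4)) * δ ^ (2 * H) :=
            mul_le_mul_of_nonneg_right h4 h2H.le
        _ = (K⁻¹ * K⁻¹ * fkA H + 1) * δ ^ (2 * H) * (1/4) := by ring
        _ ≤ (K⁻¹ * K⁻¹ * fkA H + 1) * δ ^ (2 * H) * δ ^ (2 * θ * (1 - H)) :=
            mul_le_mul_of_nonneg_left E3 (mul_nonneg hCnn h2H.le)
    · -- θ_n ≥ 2
      have ha2' : (2:ℝ) ≤ (a:ℝ) := by exact_mod_cast ha2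
      have hbδ : δ ≤ b := by rw [hbdef]; nlinarith
      have hbpos : (0:ℝ) < b := lt_of_lt_of_le hδ hbδ
      have hs1 : Set.Ioi b ∩ Set.Ioc 0 δ = ∅ := by
        ext u
        simp only [Set.mem_inter_iff, Set.mem_Ioi, Set.mem_Ioc, Set.mem_empty_iff_false,
          iff_false, not_and]
        intro h1 h2
        intro h3
        linarith
      have hs2 : Set.Ioi b ∩ Set.Ioi δ = Set.Ioi b :=
        Set.inter_eq_self_of_subset_left (fun u hu => lt_of_le_of_lt hbδ hu)
      have I2 : ∫ u in Set.Ioi b, φ₂ u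
          = K⁻¹ * K⁻¹ * ((1/2 - H) * δ) * ((1/2 - H) * δ)
            * (-b ^ (2 * H - 3 + 1) / (2 * H - 3 + 1)) := by
        simp only [hφ₂]
        rw [integral_const_mul, integral_Ioi_rpow_of_lt (by linarith : 2*H - 3 < -1) hbpos]
      rw [hsplit, hs1, hs2, setIntegral_empty, zero_add, I2]
      have hexp : (2*H - 3 + 1 : ℝ) = 2*H - 2 := by ring
      rw [hexp]
      -- lower bound for b
      have hx1 : δ ^ (-θ) < (a:ℝ) + 1 := by
        have := Nat.lt_floor_add_one (δ ^ (-θ))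
        rw [← ha] at this
        exact_mod_cast this
      have h3 : δ ^ ((1:ℝ) - θ) = δ ^ (-θ) * δ := by
        rw [show (1:ℝ) - θ = -θ + 1 by ring, Real.rpow_add hδ, Real.rpow_one]
      have hblb : δ ^ ((1:ℝ) - θ) / 3 ≤ b := by
        rw [h3, hbdef]
        nlinarith [mul_lt_mul_of_pos_right hx1 hδ,
          mul_le_mul_of_nonneg_right (by linarith : (a:ℝ) + 1 ≤ 3*((a:ℝ) - 1)) hδ.le]
      have hdpos : (0:ℝ) < δ ^ ((1:ℝ) - θ) / 3 := by positivity
      have hbp : b ^ (2*H - 2) ≤ (δ ^ ((1:ℝ) - θ) / 3) ^ (2*H - 2) :=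
        Real.rpow_le_rpow_of_nonpos hdpos hblb (by linarith)
      have hsplit3 : (δ ^ ((1:ℝ) - θ) / 3) ^ (2*H - 2)
          = δ ^ (((1:ℝ) - θ) * (2*H - 2)) * ((3:ℝ) ^ (2*H - 2))⁻¹ := by
        rw [Real.div_rpow (Real.rpow_nonneg hδ.le _) (by norm_num : (0:ℝ) ≤ 3),
          ← Real.rpow_mul hδ.le, div_eq_mul_inv]
      have h3inv : ((3:ℝ) ^ (2*H - 2))⁻¹ = (3:ℝ) ^ (2 - 2*H) := by
        rw [show (2:ℝ) - 2*H = -(2*H - 2) by ring, Real.rpow_neg (by norm_num : (0:ℝ) ≤ 3)]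
      have h39 : (3:ℝ) ^ (2 - 2*H) ≤ 9 := by
        have h1 := Real.rpow_le_rpow_of_exponent_le (by norm_num : (1:ℝ) ≤ 3)
          (by linarith : 2 - 2*H ≤ 2)
        have h2 : (3:ℝ) ^ ((2:ℝ)) = 9 := by rw [Real.rpow_two]; norm_num
        linarith
      have E2' : δ * δ * δ ^ (((1:ℝ) - θ) * (2*H - 2)) = δ ^ (2*H) * δ ^ (2*θ*(1-H)) := by
        have hδ2 : δ * δ = δ ^ (2:ℝ) := by rw [Real.rpow_two]; ring
        rw [hδ2, ← Real.rpow_add hδ, ← Real.rpow_add hδ,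
          show (2:ℝ) + (1 - θ)*(2*H - 2) = 2*H + 2*θ*(1-H) by ring]
      have hq : (0:ℝ) < 2 - 2*H := by linarith
      have h1 : (0:ℝ) ≤ 1/2 - H := by linarith
      have hinv2 : -((2*H - 2:ℝ))⁻¹ = (2 - 2*H)⁻¹ := by
        rw [show (2:ℝ) - 2*H = -(2*H - 2) by ring, inv_neg]
      have hinvnn : (0:ℝ) ≤ -((2*H - 2:ℝ))⁻¹ := by
        rw [hinv2]; positivity
      have hA1 : 9*(1/2-H)*(1/2-H) * (2-2*H)⁻¹ ≤ fkA H := by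
        rw [← div_eq_mul_inv]
        unfold fkA
        have h3 : (0:ℝ) < H + 1/2 := by linarith
        have := div_nonneg h1 h3.le
        have := div_nonneg (mul_nonneg h1 h1) hq.le
        linarith
      have h30 : (0:ℝ) ≤ (3:ℝ) ^ (2 - 2*H) := Real.rpow_nonneg (by norm_num) _
      have hpow2 : (0:ℝ) < δ ^ (2*θ*(1-H)) := Real.rpow_pos_of_pos hδ _
      have step : K⁻¹ * K⁻¹ * ((1/2 - H) * δ) * ((1/2 - H) * δ)
            * (-b ^ (2*H - 2) / (2*H - 2))
          = (K⁻¹ * K⁻¹ * ((1/2 - H)*(1/2 - H)) * (δ*δ) * (-((2*H - 2:ℝ))⁻¹))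
            * b ^ (2*H - 2) := by ring
      rw [step]
      have hDnn : (0:ℝ) ≤ K⁻¹ * K⁻¹ * ((1/2 - H)*(1/2 - H)) * (δ*δ) * (-((2*H - 2:ℝ))⁻¹) :=
        mul_nonneg (mul_nonneg (mul_nonneg hkk (mul_nonneg h1 h1))
          (mul_nonneg hδ.le hδ.le)) hinvnn
      have hbp' : b ^ (2*H - 2) ≤ δ ^ (((1:ℝ) - θ) * (2*H - 2)) * (3:ℝ) ^ (2 - 2*H) := by
        rw [← h3inv, ← hsplit3]; exact hbp
      have hcle : K⁻¹ * K⁻¹ * ((1/2 - H)*(1/2 - H)) * (3:ℝ) ^ (2 - 2*H) * (-((2*H - 2:ℝ))⁻¹)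
          ≤ K⁻¹ * K⁻¹ * fkA H + 1 := by
        have e9 : K⁻¹ * K⁻¹ * ((1/2 - H)*(1/2 - H)) * (3:ℝ) ^ (2 - 2*H) * (-((2*H - 2:ℝ))⁻¹)
            ≤ K⁻¹ * K⁻¹ * ((1/2 - H)*(1/2 - H)) * 9 * (-((2*H - 2:ℝ))⁻¹) := by
          have := mul_le_mul_of_nonneg_left h39
            (mul_nonneg (mul_nonneg (mul_nonneg hkk (mul_nonneg h1 h1)) hinvnn) (by norm_num : (0:ℝ) ≤ 1))
          nlinarith [mul_le_mul_of_nonneg_left h39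
            (mul_nonneg (mul_nonneg hkk (mul_nonneg h1 h1)) hinvnn)]
        have e10 : K⁻¹ * K⁻¹ * ((1/2 - H)*(1/2 - H)) * 9 * (-((2*H - 2:ℝ))⁻¹)
            = K⁻¹ * K⁻¹ * (9*(1/2-H)*(1/2-H) * (2-2*H)⁻¹) := by
          rw [← hinv2]; ring
        have e11 := mul_le_mul_of_nonneg_left hA1 hkk
        linarith
      calc (K⁻¹ * K⁻¹ * ((1/2 - H)*(1/2 - H)) * (δ*δ) * (-((2*H - 2:ℝ))⁻¹)) * b ^ (2*H - 2)
          ≤ (K⁻¹ * K⁻¹ * ((1/2 - H)*(1/2 - H)) * (δ*δ) * (-((2*H - 2:ℝ))⁻¹))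
            * (δ ^ (((1:ℝ) - θ) * (2*H - 2)) * (3:ℝ) ^ (2 - 2*H)) :=
            mul_le_mul_of_nonneg_left hbp' hDnn
        _ = (K⁻¹ * K⁻¹ * ((1/2 - H)*(1/2 - H)) * (3:ℝ) ^ (2 - 2*H) * (-((2*H - 2:ℝ))⁻¹))
            * (δ * δ * δ ^ (((1:ℝ) - θ) * (2*H - 2))) := by ring
        _ = (K⁻¹ * K⁻¹ * ((1/2 - H)*(1/2 - H)) * (3:ℝ) ^ (2 - 2*H) * (-((2*H - 2:ℝ))⁻¹))
            * (δ ^ (2*H) * δ ^ (2*θ*(1-H))) := by rw [E2']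
        _ ≤ (K⁻¹ * K⁻¹ * fkA H + 1) * (δ ^ (2*H) * δ ^ (2*θ*(1-H))) :=
            mul_le_mul_of_nonneg_right hcle (mul_nonneg h2H.le hpow2.le)
        _ = (K⁻¹ * K⁻¹ * fkA H + 1) * δ ^ (2 * H) * δ ^ (2 * θ * (1 - H)) := by ring
  -- assemble
  have hBint : IntegrableOn (fun s => G (c - s)) (Set.Iio m) :=
    cov_int G c m hGint.integrableOn
  calc (∫ s in Set.Iio m,
        (fracKernel H K ((i:ℝ) * δ - s) - fracKernel H K (c - s)) *
        (fracKernel H K (((i:ℝ) + (r:ℝ)) * δ - s)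
          - fracKernel H K ((((i:ℝ) + (r:ℝ)) - 1) * δ - s)))
      ≤ ∫ s in Set.Iio m, max
        ((fracKernel H K ((i:ℝ) * δ - s) - fracKernel H K (c - s)) *
        (fracKernel H K (((i:ℝ) + (r:ℝ)) * δ - s)
          - fracKernel H K ((((i:ℝ) + (r:ℝ)) - 1) * δ - s))) 0 := by
        by_cases hfi : IntegrableOn (fun s =>
          (fracKernel H K ((i:ℝ) * δ - s) - fracKernel H K (c - s)) *
          (fracKernel H K (((i:ℝ) + (r:ℝ)) * δ - s)
            - fracKernel H K ((((i:ℝ) + (r:ℝ)) - 1) * δ - s))) (Set.Iio m)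
        · exact integral_mono hfi hfi.pos_part (fun s => le_max_left _ _)
        · rw [integral_undef hfi]
          exact integral_nonneg (fun s => le_max_right _ _)
    _ ≤ ∫ s in Set.Iio m, G (c - s) :=
        integral_mono_of_nonneg (Filter.Eventually.of_forall fun s => le_max_right _ _)
          hBint (Filter.Eventually.of_forall fun s => max_le (hpoint s) (hGnn _))
    _ = ∫ u in Set.Ioi (c - m), G u := cov_Iio G c m
    _ = ∫ u in Set.Ioi b, G u := by rw [hcm]
    _ ≤ (K⁻¹ * K⁻¹ * fkA H + 1) * δ ^ (2 * H) * δ ^ (2 * θ * (1 - H)) := hval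

/-- Truncation estimate: with `θ_n = ⌊Δ_n^{-θ}⌋`, for all `n`, `i > θ_n` and `r ≥ 1`,
`∫_{-∞}^{(i-θ_n)Δ_n} Δ_i g(s) Δ_{i+r} g(s) ds ≤ C Δ_n^{2H} Δ_n^{2θ(1-H)}`. -/
theorem fracKernel_truncation (H θ : ℝ) (hH : 0 < H ∧ H < 1/2) (hθ : 0 < θ ∧ θ < 1)
    (K : ℝ)
    (hK : K = Real.sqrt (2 * H * Real.sin (Real.pi * H) * Real.Gamma (2 * H))
            / Real.Gamma (H + 1/2))
    (Δ : ℕ → ℝ) (hΔpos : ∀ n, 0 < Δ n) (hΔanti : Antitone Δ)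
    (hΔ0 : Filter.Tendsto Δ Filter.atTop (nhds 0)) :
    ∃ C > (0:ℝ), ∀ n i r : ℕ, ⌊(Δ n) ^ (-θ)⌋₊ < i → 1 ≤ r →
      (∫ s in Set.Iio (((i:ℝ) - (⌊(Δ n) ^ (-θ)⌋₊ : ℝ)) * Δ n),
          (fracKernel H K ((i:ℝ) * Δ n - s) - fracKernel H K (((i:ℝ) - 1) * Δ n - s)) *
          (fracKernel H K (((i:ℝ) + (r:ℝ)) * Δ n - s)
            - fracKernel H K ((((i:ℝ) + (r:ℝ)) - 1) * Δ n - s)))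
        ≤ C * (Δ n) ^ (2 * H) * (Δ n) ^ (2 * θ * (1 - H)) := by
  obtain ⟨hH0, hH12⟩ := hH
  have hK0 : 0 ≤ K := by
    rw [hK]
    exact div_nonneg (Real.sqrt_nonneg _) (Real.Gamma_pos_of_pos (by linarith)).le
  have hk : 0 ≤ K⁻¹ := inv_nonneg.mpr hK0
  have hAnn : 0 ≤ fkA H := fkA_nonneg hH0 hH12
  refine ⟨K⁻¹ * K⁻¹ * fkA H + 1,
    lt_of_lt_of_le one_pos (le_add_of_nonneg_left (mul_nonneg (mul_nonneg hk hk) hAnn)), ?_⟩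
  intro n i r hi hr
  exact fk_core H θ hH0 hH12 K hk (hΔpos n) i r hr
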